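/- arXiv:2109.10612 — 3 statements merged into one kernel-verified Lean document; each statement's English description precedes it below -/
import Mathlib

section
/- Let μ_n, μ be Borel probability measures on ℝ with distribution functions F_n, F and (right-continuous-inverse) quantile functions q_n, q : (0,1) → ℝ, q_n(x) = inf{u : F_n(u) > x}. If μ_n converges weakly to μ, then q_n(x) → q(x) for Lebesgue-almost every x ∈ (0,1), and under Lebesgue measure on (0,1) the function q_n has distribution μ_n. -/
open MeasureTheory Filter Set Topology

noncomputable section

/-- A Young function: even, convex, vanishing exactly at 0, nondecreasing on ℝ₊,
tending to ∞ at ∞. -/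
def IsYoung (Φ : ℝ → ℝ) : Prop :=
  (∀ x, Φ (-x) = Φ x) ∧ ConvexOn ℝ Set.univ Φ ∧ Φ 0 = 0 ∧
  (∀ x, x ≠ 0 → 0 < Φ x) ∧ MonotoneOn Φ (Set.Ici 0) ∧
  Filter.Tendsto Φ Filter.atTop Filter.atTop

/-- A conjugate pair of Young functions, characterised by Young's inequality
`a*b ≤ Φ a + Ψ b`. -/
def IsConjugatePair (Φ Ψ : ℝ → ℝ) : Prop :=
  IsYoung Φ ∧ IsYoung Ψ ∧
  (∀ a b : ℝ, 0 ≤ a → 0 ≤ b → a * b ≤ Φ a + Ψ b)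

/-- Membership in the Orlicz space `L^Φ`: `E[Φ(kξ)] < ∞` for some `k > 0`. -/
def MemLOrlicz {Ω : Type*} [MeasurableSpace Ω] (Φ : ℝ → ℝ) (P : Measure Ω) (ξ : Ω → ℝ) : Prop :=
  Measurable ξ ∧ ∃ k : ℝ, 0 < k ∧ Integrable (fun ω => Φ (k * ξ ω)) P

/-- Membership in the Orlicz heart `M^Φ`: `E[Φ(kξ)] < ∞` for every `k > 0`. -/
def MemMOrlicz {Ω : Type*} [MeasurableSpace Ω] (Φ : ℝ → ℝ) (P : Measure Ω) (ξ : Ω → ℝ) : Prop :=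
  Measurable ξ ∧ ∀ k : ℝ, 0 < k → Integrable (fun ω => Φ (k * ξ ω)) P

/-- The Luxemburg norm `inf {α > 0 : E[Φ(ξ/α)] ≤ 1}`. -/
def luxNorm {Ω : Type*} [MeasurableSpace Ω] (Φ : ℝ → ℝ) (P : Measure Ω) (ξ : Ω → ℝ) : ℝ :=
  sInf {α : ℝ | 0 < α ∧ Integrable (fun ω => Φ (ξ ω / α)) P ∧ ∫ ω, Φ (ξ ω / α) ∂P ≤ 1}

/-- A probability density: nonnegative, integrable, integrating to 1. -/
def IsDensity {Ω : Type*} [MeasurableSpace Ω] (P : Measure Ω) (h : Ω → ℝ) : Prop :=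
  Measurable h ∧ (∀ ω, 0 ≤ h ω) ∧ Integrable h P ∧ ∫ ω, h ω ∂P = 1

/-- The risk measure `ρ(η) = sup_{h ∈ S} E[η h]` on random variables. -/
def rho {Ω : Type*} [MeasurableSpace Ω] (P : Measure Ω) (S : Set (Ω → ℝ)) (η : Ω → ℝ) : ℝ :=
  sSup ((fun h => ∫ ω, η ω * h ω ∂P) '' S)

/-- The (right-continuous-inverse) quantile function `q(x) = inf {u : F(u) > x}`. -/
def quantile (ν : Measure ℝ) (x : ℝ) : ℝ :=
  sInf {u : ℝ | x < (ν (Set.Iic u)).toReal}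

/-- Lebesgue measure on the unit interval (0,1). -/
def P01 : Measure ℝ := volume.restrict (Set.Ioo (0:ℝ) 1)

/-- The increasing rearrangement of a function on (0,1): the quantile of its law. -/
def rearrange (h : ℝ → ℝ) : ℝ → ℝ := quantile (Measure.map h P01)

/-- The law-invariant risk measure on laws: `ρ(ν) = sup_{h ∈ S} ∫₀¹ q_ν h*`. -/
def rhoLaw (S : Set (ℝ → ℝ)) (ν : Measure ℝ) : ℝ :=
  sSup ((fun h => ∫ u in Set.Ioo (0:ℝ) 1, quantile ν u * rearrange h u) '' S)

/-- Weak (weak-star) convergence of measures on ℝ, tested against bounded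
continuous functions. -/
def WeakTendsto (μs : ℕ → Measure ℝ) (ν : Measure ℝ) : Prop :=
  ∀ g : BoundedContinuousFunction ℝ ℝ,
    Filter.Tendsto (fun n => ∫ x, g x ∂(μs n)) Filter.atTop (nhds (∫ x, g x ∂ν))

/-- The empirical measure `(1/N) ∑_{n<N} δ_{x n}`. -/
def empMeasure (x : ℕ → ℝ) (N : ℕ) : Measure ℝ :=
  ((N : ENNReal)⁻¹) • ∑ n ∈ Finset.range N, Measure.dirac (x n)

/-- Ando's condition: `lim_{λ→∞} sup_{h ∈ A} λ E[Φ(h/λ)] = 0`. -/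
def AndoCondition {Ω : Type*} [MeasurableSpace Ω] (Φ : ℝ → ℝ) (P : Measure Ω)
    (A : Set (Ω → ℝ)) : Prop :=
  Filter.Tendsto (fun lam : ℝ => sSup ((fun h => lam * ∫ ω, Φ (h ω / lam) ∂P) '' A))
    Filter.atTop (nhds 0)

/-- The pairing map `h ↦ (g ↦ E[h g])` against a set `G` of test functions. -/
def pairingMap {Ω : Type*} [MeasurableSpace Ω] (P : Measure Ω) (G : Set (Ω → ℝ))
    (h : Ω → ℝ) : G → ℝ := fun g => ∫ ω, h ω * g.1 ω ∂P

/-- The weak topology `σ(·, G)` on functions, induced by the pairings against `G`. -/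
def weakTopology {Ω : Type*} [MeasurableSpace Ω] (P : Measure Ω) (G : Set (Ω → ℝ)) :
    TopologicalSpace (Ω → ℝ) :=
  TopologicalSpace.induced (pairingMap P G) Pi.topologicalSpace

open ProbabilityTheory
namespace QAux

instance : IsProbabilityMeasure P01 := by
  constructor
  simp [P01, Real.volume_Ioo]

variable (ν : Measure ℝ) [IsProbabilityMeasure ν]

lemma quantile_eq (x : ℝ) : quantile ν x = sInf {u | x < cdf ν u} := by
  simp only [quantile, cdf_eq_real, measureReal_def]

/-- The left quantile. -/
def qminus (x : ℝ) : ℝ := sInf {u | x ≤ cdf ν u}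

variable {ν}

lemma nonempty_S {x : ℝ} (hx : x < 1) : {u | x < cdf ν u}.Nonempty :=
  ((tendsto_cdf_atTop ν).eventually_const_lt hx).exists

lemma bddBelow_S {x : ℝ} (hx : 0 < x) : BddBelow {u | x < cdf ν u} := by
  obtain ⟨u0, hu0⟩ := ((tendsto_cdf_atBot ν).eventually_lt_const hx).exists
  refine ⟨u0, fun v hv => ?_⟩
  by_contra h
  exact absurd (lt_of_le_of_lt (monotone_cdf ν (le_of_not_ge h)) hu0) (not_lt.2 hv.le)

lemma nonempty_T {x : ℝ} (hx : x < 1) : {u | x ≤ cdf ν u}.Nonempty := by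
  obtain ⟨u, hu⟩ := nonempty_S (ν := ν) hx
  exact ⟨u, mem_setOf_eq ▸ le_of_lt hu⟩

lemma bddBelow_T {x : ℝ} (hx : 0 < x) : BddBelow {u | x ≤ cdf ν u} := by
  obtain ⟨u0, hu0⟩ := ((tendsto_cdf_atBot ν).eventually_lt_const hx).exists
  refine ⟨u0, fun v hv => ?_⟩
  by_contra h
  exact absurd hv (not_le.2 (lt_of_le_of_lt (monotone_cdf ν (le_of_not_ge h)) hu0))

lemma quantile_le {x u : ℝ} (hx : 0 < x) (h : x < cdf ν u) : quantile ν x ≤ u := by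
  rw [quantile_eq]; exact csInf_le (bddBelow_S hx) h

lemma le_quantile {x u : ℝ} (hx1 : x < 1) (h : cdf ν u < x) : u ≤ quantile ν x := by
  rw [quantile_eq]
  refine le_csInf (nonempty_S hx1) (fun v hv => ?_)
  by_contra hc
  exact absurd (lt_of_le_of_lt (monotone_cdf ν (le_of_not_ge hc)) h) (not_lt.2 (le_of_lt hv))

lemma lt_cdf_of_quantile_lt {x u : ℝ} (hx1 : x < 1) (h : quantile ν x < u) : x < cdf ν u := by
  rw [quantile_eq] at h
  obtain ⟨v, hv, hvu⟩ := exists_lt_of_csInf_lt (nonempty_S hx1) h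
  exact lt_of_lt_of_le hv (monotone_cdf ν hvu.le)

lemma cdf_lt_of_lt_qminus {x u : ℝ} (hx : 0 < x) (h : u < qminus ν x) : cdf ν u < x := by
  by_contra hc
  exact absurd (csInf_le (bddBelow_T hx) (not_lt.1 hc)) (not_le.2 h)

lemma qminus_le_quantile {x : ℝ} (hx : 0 < x) (hx1 : x < 1) : qminus ν x ≤ quantile ν x := by
  rw [quantile_eq]
  exact csInf_le_csInf (bddBelow_T hx) (nonempty_S hx1) (fun u hu => show x ≤ cdf ν u from le_of_lt hu)


lemma le_cdf_of_quantile_le {x u : ℝ} (hx : x ∈ Ioo (0:ℝ) 1) (h : quantile ν x ≤ u) :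
    x ≤ cdf ν u := by
  have key : ∀ v, u < v → x < cdf ν v := fun v hv =>
    lt_cdf_of_quantile_lt hx.2 (lt_of_le_of_lt h hv)
  have hrc : Tendsto (cdf ν) (𝓝[>] u) (𝓝 (cdf ν u)) :=
    ((cdf ν).right_continuous u).tendsto.mono_left (nhdsWithin_mono u Ioi_subset_Ici_self)
  exact ge_of_tendsto hrc (eventually_nhdsWithin_of_forall (fun v hv => (key v hv).le))

lemma monotoneOn_quantile : MonotoneOn (quantile ν) (Ioo 0 1) := fun a ha b hb hab => by
  rw [quantile_eq, quantile_eq]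
  exact csInf_le_csInf (bddBelow_S ha.1) (nonempty_S hb.2)
    (fun u hu => show a < cdf ν u from lt_of_le_of_lt hab hu)

lemma map_quantile : Measure.map (quantile ν) P01 = ν := by
  have haem : AEMeasurable (quantile ν) P01 :=
    aemeasurable_restrict_of_monotoneOn measurableSet_Ioo monotoneOn_quantile
  have hpm : IsProbabilityMeasure (Measure.map (quantile ν) P01) :=
    Measure.isProbabilityMeasure_map haem
  refine Measure.ext_of_Iic _ _ (fun u => ?_)
  rw [Measure.map_apply_of_aemeasurable haem measurableSet_Iic, P01,
    Measure.restrict_apply' measurableSet_Ioo]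
  have h0 : (0:ℝ) ≤ cdf ν u := cdf_nonneg ν u
  have h1 : cdf ν u ≤ 1 := cdf_le_one ν u
  apply le_antisymm
  · have hsub : quantile ν ⁻¹' Iic u ∩ Ioo 0 1 ⊆ Ioc 0 (cdf ν u) := by
      rintro x ⟨hx1, hx2⟩
      exact ⟨hx2.1, le_cdf_of_quantile_le hx2 hx1⟩
    calc volume (quantile ν ⁻¹' Iic u ∩ Ioo 0 1) ≤ volume (Ioc 0 (cdf ν u)) :=
          measure_mono hsub
    _ = ENNReal.ofReal (cdf ν u) := by rw [Real.volume_Ioc]; simp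
    _ = ν (Iic u) := ofReal_cdf ν u
  · have hsub : Ioo 0 (cdf ν u) ⊆ quantile ν ⁻¹' Iic u ∩ Ioo 0 1 := by
      rintro x ⟨hx1, hx2⟩
      exact ⟨quantile_le hx1 hx2, hx1, lt_of_lt_of_le hx2 h1⟩
    calc ν (Iic u) = ENNReal.ofReal (cdf ν u) := (ofReal_cdf ν u).symm
    _ = volume (Ioo 0 (cdf ν u)) := by rw [Real.volume_Ioo]; simp
    _ ≤ _ := measure_mono hsub

lemma measure_singleton_eq_zero {u : ℝ} (hu : ContinuousAt (cdf ν) u) : ν {u} = 0 := by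
  have h1 : ν {u} = (cdf ν).measure {u} := by rw [measure_cdf]
  rw [h1, StieltjesFunction.measure_singleton]
  have hll : Function.leftLim (cdf ν) u = cdf ν u :=
    leftLim_eq_of_tendsto
      (hu.tendsto.mono_left nhdsWithin_le_nhds)
  simp [hll]

lemma quantile_le_qminus {x y : ℝ} (hx : 0 < x) (hy1 : y < 1) (hxy : x < y) :
    quantile ν x ≤ qminus ν y := by
  rw [quantile_eq]
  exact csInf_le_csInf (bddBelow_S hx) (nonempty_T hy1)
    (fun u hu => show x < cdf ν u from lt_of_lt_of_le hxy hu)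

variable (ν) in
def badSet : Set ℝ := {x | x ∈ Ioo (0:ℝ) 1 ∧ qminus ν x ≠ quantile ν x}

lemma countable_badSet : (badSet ν).Countable := by
  have key : badSet ν ⊆
      ⋃ r : ℚ, {x | x ∈ Ioo (0:ℝ) 1 ∧ qminus ν x < r ∧ (r:ℝ) < quantile ν x} := by
    rintro x ⟨hx, hne⟩
    obtain ⟨r, hr1, hr2⟩ := exists_rat_btwn (lt_of_le_of_ne (qminus_le_quantile hx.1 hx.2) hne)
    exact mem_iUnion.2 ⟨r, hx, hr1, hr2⟩
  refine Set.Countable.mono key (Set.countable_iUnion (fun r => ?_))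
  refine Set.Subsingleton.countable ?_
  rintro x ⟨hx, hxr1, hxr2⟩ y ⟨hy, hyr1, hyr2⟩
  by_contra hne
  rcases lt_or_gt_of_ne hne with h | h
  · exact absurd (lt_of_lt_of_le hxr2 (quantile_le_qminus hx.1 hy.2 h)) (not_lt.2 hyr1.le)
  · exact absurd (lt_of_lt_of_le hyr2 (quantile_le_qminus hy.1 hx.2 h)) (not_lt.2 hxr1.le)


lemma cdf_tendsto (μs : ℕ → Measure ℝ) [∀ n, IsProbabilityMeasure (μs n)]
    (hw : WeakTendsto μs ν) {u : ℝ} (hu : ν {u} = 0) :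
    Tendsto (fun n => cdf (μs n) u) atTop (𝓝 (cdf ν u)) := by
  let Pn : ℕ → ProbabilityMeasure ℝ := fun n => ⟨μs n, inferInstance⟩
  let Pl : ProbabilityMeasure ℝ := ⟨ν, inferInstance⟩
  have hP : Tendsto Pn atTop (𝓝 Pl) := by
    rw [ProbabilityMeasure.tendsto_iff_forall_integral_tendsto]
    exact hw
  have hfr : Pl (frontier (Iic u)) = 0 := by
    rw [frontier_Iic]
    simp only [Pl, ProbabilityMeasure.coeFn_def]
    simp [hu]
  have h2 := ProbabilityMeasure.tendsto_measure_of_null_frontier_of_tendsto hP hfr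
  have h3 : Tendsto (fun n => ((Pn n (Iic u) : NNReal) : ℝ)) atTop (𝓝 ((Pl (Iic u) : NNReal) : ℝ)) :=
    NNReal.tendsto_coe.2 h2
  convert h3 using 2 with n
  · exact cdf_eq_real (μs n) u
  · exact cdf_eq_real ν u

lemma tendsto_quantile (μs : ℕ → Measure ℝ) [∀ n, IsProbabilityMeasure (μs n)]
    (hw : WeakTendsto μs ν) {x : ℝ} (hx : x ∈ Ioo (0:ℝ) 1)
    (hq : qminus ν x = quantile ν x) :
    Tendsto (fun n => quantile (μs n) x) atTop (𝓝 (quantile ν x)) := by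
  have hD : {u : ℝ | ¬ ContinuousAt (cdf ν) u}.Countable :=
    Monotone.countable_not_continuousAt (monotone_cdf ν)
  have hdense : Dense {u : ℝ | ¬ ContinuousAt (cdf ν) u}ᶜ := hD.dense_compl ℝ
  rw [tendsto_order]
  constructor
  · intro b hb
    rw [← hq] at hb
    obtain ⟨u, hu, hbu, hua⟩ := hdense.exists_between hb
    have hcont : ContinuousAt (cdf ν) u := not_not.1 hu
    have hcd : cdf ν u < x := cdf_lt_of_lt_qminus hx.1 hua
    have htend := cdf_tendsto μs hw (measure_singleton_eq_zero hcont)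
    filter_upwards [htend.eventually_lt_const hcd] with n hn
    exact lt_of_lt_of_le hbu (le_quantile hx.2 hn)
  · intro b hb
    obtain ⟨u, hu, hau, hub⟩ := hdense.exists_between hb
    have hcont : ContinuousAt (cdf ν) u := not_not.1 hu
    have hcd : x < cdf ν u := lt_cdf_of_quantile_lt hx.2 hau
    have htend := cdf_tendsto μs hw (measure_singleton_eq_zero hcont)
    filter_upwards [htend.eventually_const_lt hcd] with n hn
    exact lt_of_le_of_lt (quantile_le hx.1 hn) hub

end QAux

/-- Skorohod-type lemma. If `μ_n → μ` weakly then the quantile functions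
converge a.e. on (0,1), and under Lebesgue measure on (0,1) the quantile of `μ_n`
has distribution `μ_n`. -/
theorem quantile_tendsto_ae_of_weakTendsto
    (μs : ℕ → Measure ℝ) (ν : Measure ℝ)
    [∀ n, IsProbabilityMeasure (μs n)] [IsProbabilityMeasure ν]
    (hw : WeakTendsto μs ν) :
    (∀ᵐ x ∂P01,
      Filter.Tendsto (fun n => quantile (μs n) x) Filter.atTop (nhds (quantile ν x))) ∧
    (∀ n, Measure.map (quantile (μs n)) P01 = μs n) := by
  refine ⟨?_, fun n => QAux.map_quantile⟩
  rw [ae_iff]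
  rw [P01, Measure.restrict_apply' measurableSet_Ioo]
  refine measure_mono_null ?_ ((QAux.countable_badSet (ν := ν)).measure_zero _)
  rintro x ⟨hx1, hx2⟩
  by_contra hbad
  exact hx1 (QAux.tendsto_quantile μs hw hx2 (not_not.1 (not_and.mp hbad hx2)))
end
end

section
/- Almost sure convergence of distorted empirical means: let f : [0,1] → [0,1] be convex with f(0)=0, f(1)=1, continuous at 1, with f' ∈ L^Φ(0,1) for a Young function Φ with conjugate Ψ. Let ξ ∈ L^Ψ with law μ and quantile function q, and let (ξ_n) be iid with law μ. Denote by ξ_{[n:1]} ≤ ⋯ ≤ ξ_{[n:n]} the order statistics of ξ_1,…,ξ_n. Then almost surely ξ_{[n:1]} f(1/n) + Σ_{k=1}^{n−1} ξ_{[n:k+1]} ( f((k+1)/n) − f(k/n) ) → ∫_0^1 q(u) f'(u) du. -/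
open MeasureTheory Filter Set Topology

noncomputable section

open scoped ENNReal NNReal

namespace DistortedAux

/-- the cdf of a measure, as a real number -/
def F (ν : Measure ℝ) (t : ℝ) : ℝ := (ν (Set.Iic t)).toReal

lemma F_mono (ν : Measure ℝ) [IsFiniteMeasure ν] : Monotone (F ν) := fun a b hab =>
  ENNReal.toReal_mono (measure_ne_top ν _) (measure_mono (Iic_subset_Iic.2 hab))

def Sset (ν : Measure ℝ) (x : ℝ) : Set ℝ := {v | x < F ν v}

lemma quantile_eq (ν : Measure ℝ) (x : ℝ) : quantile ν x = sInf (Sset ν x) := rfl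

lemma Sset_upclosed {ν : Measure ℝ} [IsFiniteMeasure ν] {x v w : ℝ}
    (h : v ∈ Sset ν x) (hvw : v ≤ w) : w ∈ Sset ν x :=
  lt_of_lt_of_le h (F_mono ν hvw)

lemma Sset_nonempty {ν : Measure ℝ} [IsProbabilityMeasure ν] {x : ℝ} (hx : x < 1) :
    (Sset ν x).Nonempty := by
  have h2 : Tendsto (fun v => F ν v) atTop (𝓝 1) := by
    have h1 : Tendsto (fun v => ν (Iic v)) atTop (𝓝 (ν univ)) := tendsto_measure_Iic_atTop ν
    have := (ENNReal.tendsto_toReal (by simp [measure_univ] : ν univ ≠ ⊤)).comp h1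
    simpa [F, measure_univ, Function.comp_def] using this
  obtain ⟨v, hv⟩ := (h2.eventually (eventually_gt_nhds hx)).exists
  exact ⟨v, hv⟩

lemma Sset_bddBelow {ν : Measure ℝ} [IsFiniteMeasure ν] {x : ℝ} (hx : 0 < x) :
    BddBelow (Sset ν x) := by
  have h0 : Tendsto (fun m : ℕ => ν (Iic (-(m:ℝ)))) atTop (𝓝 (ν (⋂ m : ℕ, Iic (-(m:ℝ))))) := by
    refine tendsto_measure_iInter_atTop (fun m => measurableSet_Iic.nullMeasurableSet)
      (fun a b hab => Iic_subset_Iic.2 (by simp; exact_mod_cast hab)) ⟨0, measure_ne_top ν _⟩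
  have hempty : (⋂ m : ℕ, Iic (-(m:ℝ))) = ∅ := by
    ext y; simp only [mem_iInter, mem_Iic, mem_empty_iff_false, iff_false, not_forall, not_le]
    obtain ⟨m, hm⟩ := exists_nat_gt (-y)
    exact ⟨m, by linarith⟩
  rw [hempty, measure_empty] at h0
  have h1 : Tendsto (fun m : ℕ => F ν (-(m:ℝ))) atTop (𝓝 0) := by
    have := (ENNReal.tendsto_toReal (by simp : (0:ℝ≥0∞) ≠ ⊤)).comp h0
    simpa [F, Function.comp_def] using this
  obtain ⟨m, hm⟩ := (h1.eventually (eventually_lt_nhds hx)).exists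
  refine ⟨-(m:ℝ), fun v hv => le_of_not_gt fun hlt => ?_⟩
  have : F ν v ≤ F ν (-(m:ℝ)) := F_mono ν hlt.le
  have hxv : x < F ν v := hv
  linarith

lemma quantile_le {ν : Measure ℝ} [IsFiniteMeasure ν] {x v : ℝ} (hx : 0 < x)
    (h : v ∈ Sset ν x) : quantile ν x ≤ v :=
  csInf_le (Sset_bddBelow hx) h

lemma mem_of_quantile_lt {ν : Measure ℝ} [IsFiniteMeasure ν] {x v : ℝ}
    (hne : (Sset ν x).Nonempty) (h : quantile ν x < v) : v ∈ Sset ν x := by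
  by_cases hb : BddBelow (Sset ν x)
  · obtain ⟨w, hw, hwv⟩ := (csInf_lt_iff hb hne).1 h
    exact Sset_upclosed hw hwv.le
  · obtain ⟨w, hw, hwv⟩ := (not_bddBelow_iff.1 hb) v
    exact Sset_upclosed hw hwv.le

lemma F_le_of_lt_quantile {ν : Measure ℝ} [IsFiniteMeasure ν] {x v : ℝ} (hx : 0 < x)
    (h : v < quantile ν x) : F ν v ≤ x := by
  by_contra hlt
  push_neg at hlt
  exact absurd (quantile_le hx hlt) (not_le.2 h)

lemma le_F_of_quantile_le {ν : Measure ℝ} [IsProbabilityMeasure ν] {x t : ℝ}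
    (hx1 : x < 1) (h : quantile ν x ≤ t) : x ≤ F ν t := by
  have key : ∀ m : ℕ, x < F ν (t + 1/(m+1)) := by
    intro m
    have hpos : (0:ℝ) < 1/(m+1) := by positivity
    exact mem_of_quantile_lt (Sset_nonempty hx1) (lt_of_le_of_lt h (by linarith))
  have hiInter : (⋂ m : ℕ, Iic (t + 1/(m+1))) = Iic t := by
    ext y
    simp only [mem_iInter, mem_Iic]
    constructor
    · intro hy
      by_contra hyt
      push_neg at hyt
      obtain ⟨m, hm⟩ := exists_nat_one_div_lt (sub_pos.2 hyt)
      linarith [hy m]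
    · intro hy m
      have hpos : (0:ℝ) < 1/(m+1) := by positivity
      linarith
  have hlim : Tendsto (fun m : ℕ => ν (Iic (t + 1/(m+1)))) atTop (𝓝 (ν (Iic t))) := by
    have := tendsto_measure_iInter_atTop (μ := ν) (s := fun m : ℕ => Iic (t + 1/(m+1)))
      (fun m => measurableSet_Iic.nullMeasurableSet)
      (fun a b hab => Iic_subset_Iic.2 (add_le_add_right (one_div_le_one_div_of_le
        (by positivity) (add_le_add_left (Nat.cast_le.mpr hab) 1)) t)) ⟨0, measure_ne_top ν _⟩
    rwa [hiInter] at this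
  have hlimR : Tendsto (fun m : ℕ => F ν (t + 1/(m+1))) atTop (𝓝 (F ν t)) := by
    have := (ENNReal.tendsto_toReal (measure_ne_top ν (Iic t))).comp hlim
    simpa [F, Function.comp_def] using this
  exact ge_of_tendsto hlimR (Eventually.of_forall fun m => (key m).le)

lemma quantile_monoOn (ν : Measure ℝ) [IsProbabilityMeasure ν] :
    MonotoneOn (quantile ν) (Ioo (0:ℝ) 1) := by
  intro a ha b hb hab
  exact csInf_le_csInf (Sset_bddBelow ha.1) (Sset_nonempty hb.2)
    (fun v hv => lt_of_le_of_lt hab hv)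

instance : IsProbabilityMeasure P01 :=
  ⟨by simp [P01, Measure.restrict_apply_univ, Real.volume_Ioo]⟩

lemma quantile_aemeasurable (ν : Measure ℝ) [IsProbabilityMeasure ν] :
    AEMeasurable (quantile ν) P01 :=
  aemeasurable_restrict_of_monotoneOn measurableSet_Ioo (quantile_monoOn ν)

lemma map_quantile (ν : Measure ℝ) [IsProbabilityMeasure ν] :
    Measure.map (quantile ν) P01 = ν := by
  refine MeasureTheory.Measure.ext_of_Iic _ _ (fun t => ?_)
  rw [Measure.map_apply_of_aemeasurable (quantile_aemeasurable ν) measurableSet_Iic]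
  have hF0 : 0 ≤ F ν t := ENNReal.toReal_nonneg
  have hF1 : F ν t ≤ 1 := by
    have h := prob_le_one (μ := ν) (s := Iic t)
    have := ENNReal.toReal_mono (by simp : (1:ℝ≥0∞) ≠ ⊤) h
    simpa [F] using this
  have hle : P01 (quantile ν ⁻¹' Iic t) ≤ ENNReal.ofReal (F ν t) := by
    rw [P01, Measure.restrict_apply' measurableSet_Ioo]
    have hsub : quantile ν ⁻¹' Iic t ∩ Ioo 0 1 ⊆ Ioc (0:ℝ) (F ν t) := by
      rintro u ⟨hu1, hu2⟩
      exact ⟨hu2.1, le_F_of_quantile_le hu2.2 hu1⟩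
    calc volume (quantile ν ⁻¹' Iic t ∩ Ioo 0 1) ≤ volume (Ioc (0:ℝ) (F ν t)) :=
          measure_mono hsub
      _ = ENNReal.ofReal (F ν t) := by rw [Real.volume_Ioc, sub_zero]
  have hge : ENNReal.ofReal (F ν t) ≤ P01 (quantile ν ⁻¹' Iic t) := by
    rw [P01, Measure.restrict_apply' measurableSet_Ioo]
    have hsub : Ioo (0:ℝ) (F ν t) ⊆ quantile ν ⁻¹' Iic t ∩ Ioo 0 1 := by
      rintro u ⟨hu1, hu2⟩
      have hu3 : u < 1 := lt_of_lt_of_le hu2 hF1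
      exact ⟨quantile_le hu1 hu2, hu1, hu3⟩
    calc ENNReal.ofReal (F ν t) = volume (Ioo (0:ℝ) (F ν t)) := by
          rw [Real.volume_Ioo, sub_zero]
      _ ≤ _ := measure_mono hsub
  have : P01 (quantile ν ⁻¹' Iic t) = ENNReal.ofReal (F ν t) := le_antisymm hle hge
  rw [this, F, ENNReal.ofReal_toReal (measure_ne_top ν _)]

lemma quantile_tendsto_of_cdf_tendsto {μ : Measure ℝ} [IsProbabilityMeasure μ]
    {ν : ℕ → Measure ℝ} (hprob : ∀ n, IsProbabilityMeasure (ν n))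
    (hF : ∀ r : ℚ, Tendsto (fun n => F (ν n) r) atTop (𝓝 (F μ r)))
    {u : ℝ} (hu : u ∈ Ioo (0:ℝ) 1) (hB : u ∉ Set.range (fun r : ℚ => F μ r)) :
    Tendsto (fun n => quantile (ν n) u) atTop (𝓝 (quantile μ u)) := by
  haveI := hprob
  refine tendsto_order.2 ⟨fun b hb => ?_, fun b hb => ?_⟩
  · obtain ⟨r, hbr, hrq⟩ := exists_rat_btwn hb
    have h1 : F μ r ≤ u := F_le_of_lt_quantile hu.1 hrq
    have h2 : F μ r < u := lt_of_le_of_ne h1 (fun h => hB ⟨r, h⟩)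
    filter_upwards [(hF r).eventually (eventually_lt_nhds h2)] with n hn
    by_contra hq
    push_neg at hq
    have hmem : (r:ℝ) ∈ Sset (ν n) u :=
      mem_of_quantile_lt (Sset_nonempty hu.2) (lt_of_le_of_lt hq hbr)
    exact lt_asymm hn hmem
  · obtain ⟨r, hqr, hrb⟩ := exists_rat_btwn hb
    have h1 : (r:ℝ) ∈ Sset μ u := mem_of_quantile_lt (Sset_nonempty hu.2) hqr
    filter_upwards [(hF r).eventually (eventually_gt_nhds h1)] with n hn
    exact lt_of_le_of_lt (quantile_le hu.1 hn) hrb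


/-! ### Empirical measures -/

lemma empMeasure_apply (x : ℕ → ℝ) (N : ℕ) (s : Set ℝ) :
    empMeasure x N s = (N : ℝ≥0∞)⁻¹ * ∑ i ∈ Finset.range N, s.indicator (1 : ℝ → ℝ≥0∞) (x i) := by
  rw [empMeasure, Measure.smul_apply, Measure.finset_sum_apply, smul_eq_mul]
  congr 1
  exact Finset.sum_congr rfl fun i _ => Measure.dirac_apply (x i) s

lemma empMeasure_prob (x : ℕ → ℝ) {N : ℕ} (hN : N ≠ 0) :
    IsProbabilityMeasure (empMeasure x N) := by
  constructor
  rw [empMeasure_apply]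
  simp only [indicator_univ, Pi.one_apply, Finset.sum_const, Finset.card_range, nsmul_eq_mul,
    mul_one]
  exact ENNReal.inv_mul_cancel (by exact_mod_cast hN) (by simp)

lemma integrable_dirac' {h : ℝ → ℝ} (hm : Measurable h) (a : ℝ) :
    Integrable h (Measure.dirac a) := by
  refine ⟨hm.aestronglyMeasurable, ?_⟩
  rw [HasFiniteIntegral, lintegral_dirac]
  exact ENNReal.coe_lt_top

lemma integrable_empMeasure {h : ℝ → ℝ} (hm : Measurable h) (x : ℕ → ℝ) (N : ℕ) :
    Integrable h (empMeasure x N) := by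
  refine ⟨hm.aestronglyMeasurable, ?_⟩
  rw [HasFiniteIntegral, empMeasure, lintegral_smul_measure, lintegral_finset_sum_measure]
  simp only [lintegral_dirac]
  rcases Nat.eq_zero_or_pos N with hN | hN
  · simp [hN]
  exact ENNReal.mul_lt_top (ENNReal.inv_lt_top.2 (by exact_mod_cast hN))
    (ENNReal.sum_lt_top.2 fun i _ => ENNReal.coe_lt_top)

lemma integral_empMeasure {h : ℝ → ℝ} (hm : Measurable h) (x : ℕ → ℝ) (N : ℕ) :
    ∫ t, h t ∂(empMeasure x N) = (∑ i ∈ Finset.range N, h (x i)) / N := by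
  rw [empMeasure, integral_smul_measure,
    integral_finset_sum_measure (fun i _ => integrable_dirac' hm (x i))]
  simp only [integral_dirac, ENNReal.toReal_inv, ENNReal.toReal_natCast, smul_eq_mul]
  rw [inv_mul_eq_div]

lemma F_empMeasure (x : ℕ → ℝ) (N : ℕ) (r : ℝ) :
    DistortedAux.F (empMeasure x N) r
      = (∑ i ∈ Finset.range N, (Iic r).indicator (fun _ => (1:ℝ)) (x i)) / N := by
  rw [← integral_empMeasure (measurable_const.indicator measurableSet_Iic) x N]
  rw [DistortedAux.F, ← measureReal_def, ← integral_indicator_one measurableSet_Iic]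
  rfl

/-! ### A strong law of large numbers helper -/

lemma slln {Ω : Type*} [MeasurableSpace Ω] {P : Measure Ω} [IsProbabilityMeasure P]
    {ξ : Ω → ℝ} (hξm : Measurable ξ) {ξs : ℕ → Ω → ℝ} (hmeas : ∀ n, Measurable (ξs n))
    (hindep : ProbabilityTheory.iIndepFun (m := fun _ => Real.measurableSpace) ξs P)
    (hid : ∀ n, Measure.map (ξs n) P = Measure.map ξ P)
    {g : ℝ → ℝ} (hg : Measurable g) (hint : Integrable g (Measure.map ξ P)) :
    ∀ᵐ ω ∂P, Tendsto (fun n => (∑ i ∈ Finset.range n, g (ξs i ω)) / n) atTop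
      (𝓝 (∫ t, g t ∂(Measure.map ξ P))) := by
  have hX0 : Integrable (fun ω => g (ξs 0 ω)) P := by
    have := (integrable_map_measure hg.aestronglyMeasurable (hmeas 0).aemeasurable).1
      (by rw [hid 0]; exact hint)
    exact this
  have hident : ∀ i, ProbabilityTheory.IdentDistrib (fun ω => g (ξs i ω))
      (fun ω => g (ξs 0 ω)) P P := by
    intro i
    have hbase : ProbabilityTheory.IdentDistrib (ξs i) (ξs 0) P P :=
      ⟨(hmeas i).aemeasurable, (hmeas 0).aemeasurable, by rw [hid i, hid 0]⟩
    exact hbase.comp hg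
  have hpind : Pairwise (Function.onFun (ProbabilityTheory.IndepFun · · P) fun i ω => g (ξs i ω)) := by
    intro i j hij
    exact (hindep.indepFun hij).comp hg hg
  have := ProbabilityTheory.strong_law_ae_real (fun i ω => g (ξs i ω)) hX0 hpind hident
  have hE : ∫ ω, g (ξs 0 ω) ∂P = ∫ t, g t ∂(Measure.map ξ P) := by
    rw [← hid 0, integral_map (hmeas 0).aemeasurable hg.aestronglyMeasurable]
  filter_upwards [this] with ω hω
  rw [← hE]
  exact hω

/-! ### A Fatou-type lemma and generalized dominated convergence -/

lemma fatou_le {α : Type*} [MeasurableSpace α] {μ : Measure α} {φ : ℕ → α → ℝ} {Flim : α → ℝ}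
    (hφi : ∀ n, Integrable (φ n) μ) (h0 : ∀ n, 0 ≤ᵐ[μ] φ n)
    (hFi : Integrable Flim μ)
    (hlim : ∀ᵐ a ∂μ, Tendsto (fun n => φ n a) atTop (𝓝 (Flim a)))
    {c : ℝ} (hc : Tendsto (fun n => ∫ a, φ n a ∂μ) atTop (𝓝 c)) :
    ∫ a, Flim a ∂μ ≤ c := by
  have hF0 : 0 ≤ᵐ[μ] Flim := by
    filter_upwards [hlim, ae_all_iff.2 h0] with a ha h0a
    exact ge_of_tendsto ha (Eventually.of_forall fun n => h0a n)
  have key : ∫⁻ a, ENNReal.ofReal (Flim a) ∂μ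
      ≤ liminf (fun n => ∫⁻ a, ENNReal.ofReal (φ n a) ∂μ) atTop := by
    refine le_trans (le_of_eq ?_)
      (lintegral_liminf_le' fun n => ((hφi n).1.aemeasurable.ennreal_ofReal))
    refine lintegral_congr_ae ?_
    filter_upwards [hlim] with a ha
    exact (((ENNReal.continuous_ofReal.tendsto _).comp ha).liminf_eq).symm
  have e1 : ∀ n, ∫⁻ a, ENNReal.ofReal (φ n a) ∂μ = ENNReal.ofReal (∫ a, φ n a ∂μ) :=
    fun n => (ofReal_integral_eq_lintegral_ofReal (hφi n) (h0 n)).symm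
  have e2 : ∫⁻ a, ENNReal.ofReal (Flim a) ∂μ = ENNReal.ofReal (∫ a, Flim a ∂μ) :=
    (ofReal_integral_eq_lintegral_ofReal hFi hF0).symm
  have e3 : liminf (fun n => ENNReal.ofReal (∫ a, φ n a ∂μ)) atTop = ENNReal.ofReal c :=
    ((ENNReal.continuous_ofReal.tendsto _).comp hc).liminf_eq
  rw [e2] at key
  simp_rw [e1] at key
  rw [e3] at key
  have hc0 : 0 ≤ c :=
    ge_of_tendsto hc (Eventually.of_forall fun n => integral_nonneg_of_ae (h0 n))
  exact (ENNReal.ofReal_le_ofReal_iff hc0).1 key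

lemma genLDC {α : Type*} [MeasurableSpace α] {μ : Measure α} {g G : ℕ → α → ℝ}
    {gl Gl : α → ℝ}
    (hgm : ∀ n, AEStronglyMeasurable (g n) μ)
    (hdom : ∀ n, ∀ᵐ a ∂μ, |g n a| ≤ G n a)
    (hGi : ∀ n, Integrable (G n) μ) (hGli : Integrable Gl μ)
    (hgt : ∀ᵐ a ∂μ, Tendsto (fun n => g n a) atTop (𝓝 (gl a)))
    (hGt : ∀ᵐ a ∂μ, Tendsto (fun n => G n a) atTop (𝓝 (Gl a)))
    (hGit : Tendsto (fun n => ∫ a, G n a ∂μ) atTop (𝓝 (∫ a, Gl a ∂μ))) :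
    Tendsto (fun n => ∫ a, g n a ∂μ) atTop (𝓝 (∫ a, gl a ∂μ)) := by
  have hgi : ∀ n, Integrable (g n) μ := fun n => Integrable.mono' (hGi n) (hgm n)
    ((hdom n).mono fun a ha => by simpa [Real.norm_eq_abs] using ha)
  have hglm : AEStronglyMeasurable gl μ := aestronglyMeasurable_of_tendsto_ae atTop hgm hgt
  have hdgl : ∀ᵐ a ∂μ, |gl a| ≤ Gl a := by
    filter_upwards [hgt, hGt, ae_all_iff.2 hdom] with a h1 h2 h3
    exact le_of_tendsto_of_tendsto' h1.abs h2 h3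
  have hgli : Integrable gl μ := Integrable.mono' hGli hglm
    (hdgl.mono fun a ha => by simpa [Real.norm_eq_abs] using ha)
  obtain ⟨B, hB⟩ : ∃ B, ∀ n, ∫ a, G n a ∂μ ≤ B := by
    obtain ⟨B, hB⟩ := hGit.bddAbove_range
    exact ⟨B, fun n => hB ⟨n, rfl⟩⟩
  have habs : ∀ n, |∫ a, g n a ∂μ| ≤ B := by
    intro n
    have h1 : |∫ a, g n a ∂μ| ≤ ∫ a, |g n a| ∂μ := by
      simpa [Real.norm_eq_abs] using norm_integral_le_integral_norm (μ := μ) (g n)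
    have h2 : ∫ a, |g n a| ∂μ ≤ ∫ a, G n a ∂μ :=
      integral_mono_ae (hgi n).abs (hGi n) (hdom n)
    exact h1.trans (h2.trans (hB n))
  refine tendsto_of_subseq_tendsto fun ns hns => ?_
  obtain ⟨a, -, ms, hms_mono, hms_tendsto⟩ := tendsto_subseq_of_bounded
    (Metric.isBounded_Icc (-B) B)
    (x := fun k => ∫ x, g (ns k) x ∂μ) (fun k => abs_le.1 (habs (ns k)))
  have hm : Tendsto (fun k => ns (ms k)) atTop atTop := hns.comp hms_mono.tendsto_atTop
  have h₁ : ∫ a, (Gl a + gl a) ∂μ ≤ ∫ a, Gl a ∂μ + a := by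
    refine fatou_le (φ := fun k x => G (ns (ms k)) x + g (ns (ms k)) x)
      (fun k => (hGi _).add (hgi _))
      (fun k => (hdom (ns (ms k))).mono fun x hx => by
        simp only [Pi.zero_apply]; linarith [neg_abs_le (g (ns (ms k)) x)])
      (hGli.add hgli) ?_ ?_
    · filter_upwards [hgt, hGt] with x h1 h2
      exact ((h2.comp hm).add (h1.comp hm))
    · exact ((hGit.comp hm).add hms_tendsto).congr
        fun k => (integral_add (hGi _) (hgi _)).symm
  have h₂ : ∫ a, (Gl a - gl a) ∂μ ≤ ∫ a, Gl a ∂μ - a := by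
    refine fatou_le (φ := fun k x => G (ns (ms k)) x - g (ns (ms k)) x)
      (fun k => (hGi _).sub (hgi _))
      (fun k => (hdom (ns (ms k))).mono fun x hx => by
        simp only [Pi.zero_apply]; linarith [le_abs_self (g (ns (ms k)) x)])
      (hGli.sub hgli) ?_ ?_
    · filter_upwards [hgt, hGt] with x h1 h2
      exact ((h2.comp hm).sub (h1.comp hm))
    · exact ((hGit.comp hm).sub hms_tendsto).congr
        fun k => (integral_sub (hGi _) (hgi _)).symm
  rw [integral_add hGli hgli] at h₁
  rw [integral_sub hGli hgli] at h₂
  have : a = ∫ x, gl x ∂μ := le_antisymm (by linarith) (by linarith)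
  exact ⟨ms, this ▸ hms_tendsto⟩


lemma even_eval {Φ : ℝ → ℝ} (he : ∀ x, Φ (-x) = Φ x) (c a : ℝ) (hc : 0 ≤ c) :
    Φ (c * |a|) = Φ (c * a) := by
  rcases abs_cases a with ⟨h, _⟩ | ⟨h, _⟩
  · rw [h]
  · rw [h, mul_neg, he]

lemma young_dom {Φ Ψ : ℝ → ℝ} (hpair : IsConjugatePair Φ Ψ) {k k0 : ℝ}
    (hk : 0 < k) (hk0 : 0 < k0) (a b : ℝ) :
    |a * b| ≤ (Φ (k0 * a) + Ψ (k * b)) / (k * k0) := by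
  have key := hpair.2.2 (k0 * |a|) (k * |b|) (by positivity) (by positivity)
  rw [even_eval hpair.1.1 k0 a hk0.le, even_eval hpair.2.1.1 k b hk.le] at key
  rw [← sub_nonneg] at key ⊢
  have h1 : (Φ (k0 * a) + Ψ (k * b)) / (k * k0) - |a * b|
      = ((Φ (k0 * a) + Ψ (k * b)) - (k0 * |a|) * (k * |b|)) / (k * k0) := by
    rw [abs_mul]; field_simp
  rw [h1]
  exact div_nonneg key (by positivity)

end DistortedAux

/-- almost sure convergence of distorted empirical means: the Choquet
integral of the empirical quantile function (which equals the order-statistics sum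
`ξ_{[n:1]} f(1/n) + ∑ ξ_{[n:k+1]}(f((k+1)/n) − f(k/n))`) converges a.s. to `∫₀¹ q f'`. -/
theorem distorted_empirical_mean_tendsto
    {Ω : Type*} [MeasurableSpace Ω] (P : Measure Ω) [IsProbabilityMeasure P]
    (Φ Ψ : ℝ → ℝ) (hpair : IsConjugatePair Φ Ψ)
    (f : ℝ → ℝ) (hconv : ConvexOn ℝ (Set.Icc 0 1) f)
    (h0 : f 0 = 0) (h1 : f 1 = 1)
    (hcont : ContinuousWithinAt f (Set.Icc 0 1) 1)
    (f' : ℝ → ℝ) (hf' : ∀ᵐ u ∂P01, HasDerivAt f (f' u) u)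
    (hf'Φ : MemLOrlicz Φ P01 f')
    (ξ : Ω → ℝ) (hξ : MemLOrlicz Ψ P ξ)
    (ξs : ℕ → Ω → ℝ) (hmeas : ∀ n, Measurable (ξs n))
    (hindep : ProbabilityTheory.iIndepFun (m := fun _ => Real.measurableSpace) ξs P)
    (hid : ∀ n, Measure.map (ξs n) P = Measure.map ξ P) :
    ∀ᵐ ω ∂P,
      Filter.Tendsto
        (fun n => ∫ u in Set.Ioo (0:ℝ) 1,
          quantile (empMeasure (fun i => ξs i ω) n) u * f' u)
        Filter.atTop
        (nhds (∫ u in Set.Ioo (0:ℝ) 1, quantile (Measure.map ξ P) u * f' u)) := by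
  classical
  obtain ⟨hf'm, k0, hk0, hΦint⟩ := hf'Φ
  obtain ⟨hξm, k, hk, hΨint⟩ := hξ
  have hΨc : Continuous Ψ := continuousOn_univ.1 ((hpair.2.1.2.1).continuousOn isOpen_univ)
  have hgΨ : Measurable fun t : ℝ => Ψ (k * t) := hΨc.measurable.comp (measurable_id.const_mul k)
  set μ : Measure ℝ := Measure.map ξ P with hμdef
  haveI : IsProbabilityMeasure μ := Measure.isProbabilityMeasure_map hξm.aemeasurable
  have hΨμ : Integrable (fun t => Ψ (k * t)) μ :=
    (integrable_map_measure hgΨ.aestronglyMeasurable hξm.aemeasurable).2 hΨint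
  have E1 := DistortedAux.slln hξm hmeas hindep hid hgΨ hΨμ
  have E2 : ∀ᵐ ω ∂P, ∀ r : ℚ, Tendsto
      (fun n => (∑ i ∈ Finset.range n, (Iic (r:ℝ)).indicator (fun _ => (1:ℝ)) (ξs i ω)) / n)
      atTop (𝓝 (∫ t, (Iic (r:ℝ)).indicator (fun _ => (1:ℝ)) t ∂μ)) := by
    rw [ae_all_iff]
    intro r
    refine DistortedAux.slln hξm hmeas hindep hid
      (measurable_const.indicator measurableSet_Iic) ?_
    exact (integrable_indicator_iff measurableSet_Iic).2
      (integrableOn_const (measure_ne_top μ _))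
  filter_upwards [E1, E2] with ω hω1 hω2
  set x : ℕ → ℝ := fun i => ξs i ω with hxdef
  have hprob : ∀ n : ℕ, IsProbabilityMeasure (empMeasure x (n+1)) :=
    fun n => DistortedAux.empMeasure_prob x n.succ_ne_zero
  have hcdf : ∀ r : ℚ, Tendsto (fun n => DistortedAux.F (empMeasure x n) r) atTop
      (𝓝 (DistortedAux.F μ r)) := by
    intro r
    have h2 : ∫ t, (Iic (r:ℝ)).indicator (fun _ => (1:ℝ)) t ∂μ = DistortedAux.F μ r := by
      rw [DistortedAux.F, ← measureReal_def, ← integral_indicator_one measurableSet_Iic]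
      rfl
    have h3 := hω2 r
    rw [h2] at h3
    exact h3.congr fun n => (DistortedAux.F_empMeasure x n r).symm
  have hq : ∀ᵐ u ∂P01, Tendsto (fun n => quantile (empMeasure x (n+1)) u) atTop
      (𝓝 (quantile μ u)) := by
    have hBnull : (volume (Set.range fun r : ℚ => DistortedAux.F μ r)) = 0 :=
      (Set.countable_range _).measure_zero _
    have hae1 : ∀ᵐ u ∂P01, u ∉ Set.range (fun r : ℚ => DistortedAux.F μ r) := by
      refine ae_restrict_of_ae ?_
      rw [ae_iff]
      simpa [Set.range] using hBnull
    have hae2 : ∀ᵐ u ∂P01, u ∈ Ioo (0:ℝ) 1 := ae_restrict_mem measurableSet_Ioo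
    filter_upwards [hae1, hae2] with u hu1 hu2
    exact DistortedAux.quantile_tendsto_of_cdf_tendsto hprob
      (fun r => (hcdf r).comp (tendsto_add_atTop_nat 1)) hu2 hu1
  have hAEq : ∀ n : ℕ, AEMeasurable (quantile (empMeasure x (n+1))) P01 := fun n =>
    haveI := hprob n
    DistortedAux.quantile_aemeasurable _
  have hAEqμ : AEMeasurable (quantile μ) P01 := DistortedAux.quantile_aemeasurable μ
  have hmap : ∀ n : ℕ, Measure.map (quantile (empMeasure x (n+1))) P01 = empMeasure x (n+1) :=
    fun n => haveI := hprob n; DistortedAux.map_quantile _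
  have hmapμ : Measure.map (quantile μ) P01 = μ := DistortedAux.map_quantile μ
  have hΨqn : ∀ n : ℕ, Integrable (fun u => Ψ (k * quantile (empMeasure x (n+1)) u)) P01 := by
    intro n
    have := (integrable_map_measure hgΨ.aestronglyMeasurable (hAEq n)).1
      (by rw [hmap n]; exact DistortedAux.integrable_empMeasure hgΨ x (n+1))
    exact this
  have hΨq : Integrable (fun u => Ψ (k * quantile μ u)) P01 := by
    have := (integrable_map_measure hgΨ.aestronglyMeasurable hAEqμ).1 (by rw [hmapμ]; exact hΨμ)
    exact this
  have hΦf : Integrable (fun u => Φ (k0 * f' u)) P01 := hΦint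
  have hIψn : ∀ n : ℕ, ∫ u, Ψ (k * quantile (empMeasure x (n+1)) u) ∂P01
      = (∑ i ∈ Finset.range (n+1), Ψ (k * x i)) / ((n+1 : ℕ) : ℝ) := by
    intro n
    have hbase := DistortedAux.integral_empMeasure hgΨ x (n+1)
    have h5 := integral_map (hAEq n) (f := fun t => Ψ (k * t)) hgΨ.aestronglyMeasurable
    rw [hmap n, hbase] at h5
    exact h5.symm
  have hIψμ : ∫ u, Ψ (k * quantile μ u) ∂P01 = ∫ t, Ψ (k * t) ∂μ := by
    have h5 := integral_map hAEqμ (f := fun t => Ψ (k * t)) hgΨ.aestronglyMeasurable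
    rw [hmapμ] at h5
    exact h5.symm
  have hψlim : Tendsto (fun n => ∫ u, Ψ (k * quantile (empMeasure x (n+1)) u) ∂P01) atTop
      (𝓝 (∫ u, Ψ (k * quantile μ u) ∂P01)) := by
    rw [hIψμ]
    have h6 := hω1.comp (tendsto_add_atTop_nat 1)
    refine h6.congr fun n => ?_
    simp only [Function.comp_apply]
    exact (hIψn n).symm
  set c : ℝ := k * k0 with hcdef
  have main := DistortedAux.genLDC (μ := P01)
    (g := fun n u => quantile (empMeasure x (n+1)) u * f' u)
    (G := fun n u => (Φ (k0 * f' u) + Ψ (k * quantile (empMeasure x (n+1)) u)) / c)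
    (gl := fun u => quantile μ u * f' u)
    (Gl := fun u => (Φ (k0 * f' u) + Ψ (k * quantile μ u)) / c)
    (fun n => ((hAEq n).aestronglyMeasurable.mul hf'm.aestronglyMeasurable))
    (fun n => Eventually.of_forall fun u => by
      have hyd := DistortedAux.young_dom hpair hk hk0 (f' u)
        (quantile (empMeasure x (n+1)) u)
      have h7 : |quantile (empMeasure x (n+1)) u * f' u|
          = |f' u * quantile (empMeasure x (n+1)) u| := by rw [mul_comm]
      rw [hcdef, h7]
      exact hyd)
    (fun n => (hΦf.add (hΨqn n)).div_const c)
    ((hΦf.add hΨq).div_const c)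
    (by filter_upwards [hq] with u hu using hu.mul_const (f' u))
    (by
      filter_upwards [hq] with u hu
      exact ((tendsto_const_nhds.add (((hΨc.tendsto _).comp (hu.const_mul k)))).div_const c))
    (by
      have hGn : ∀ n : ℕ,
          ∫ u, (Φ (k0 * f' u) + Ψ (k * quantile (empMeasure x (n+1)) u)) / c ∂P01
          = ((∫ u, Φ (k0 * f' u) ∂P01)
              + ∫ u, Ψ (k * quantile (empMeasure x (n+1)) u) ∂P01) / c := by
        intro n
        rw [integral_div, integral_add hΦf (hΨqn n)]
      have hGl : ∫ u, (Φ (k0 * f' u) + Ψ (k * quantile μ u)) / c ∂P01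
          = ((∫ u, Φ (k0 * f' u) ∂P01) + ∫ u, Ψ (k * quantile μ u) ∂P01) / c := by
        rw [integral_div, integral_add hΦf hΨq]
      rw [hGl]
      exact ((tendsto_const_nhds.add hψlim).div_const c).congr fun n => (hGn n).symm)
  rw [← tendsto_add_atTop_iff_nat
    (f := fun n => ∫ u in Set.Ioo (0:ℝ) 1, quantile (empMeasure x n) u * f' u) 1]
  exact main
end
end

section
/- Let Φ be a Young function and μ_n, μ probability measures on ℝ such that the quantile functions satisfy q_n → q Lebesgue-a.e. on (0,1) and ∫_0^1 Φ(2k q_n^+) + Φ(2k q_n^−) du → ∫_0^1 Φ(2kq^+) + Φ(2kq^−) du < ∞ for a fixed k > 0. Then the family {Φ(k|q_n − q|) : n ≥ n₀} is uniformly integrable for some n₀, and ∫_0^1 Φ(k|q_n − q|) du → 0. -/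
open MeasureTheory Filter Set Topology

noncomputable section

open scoped ENNReal NNReal

lemma young_nonneg {Φ : ℝ → ℝ} (hΦ : IsYoung Φ) (x : ℝ) : 0 ≤ Φ x := by
  rcases eq_or_ne x 0 with h | h
  · simp [h, hΦ.2.2.1]
  · exact (hΦ.2.2.2.1 x h).le

lemma young_abs {Φ : ℝ → ℝ} (hΦ : IsYoung Φ) (x : ℝ) : Φ |x| = Φ x := by
  rcases le_or_gt 0 x with h | h
  · rw [abs_of_nonneg h]
  · rw [abs_of_neg h, hΦ.1]

lemma young_continuous {Φ : ℝ → ℝ} (hΦ : IsYoung Φ) : Continuous Φ := by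
  rw [← continuousOn_univ]
  exact hΦ.2.1.continuousOn isOpen_univ

lemma young_split {Φ : ℝ → ℝ} (hΦ : IsYoung Φ) {c : ℝ} (hc : 0 ≤ c) (a : ℝ) :
    Φ (c * |a|) = Φ (c * max a 0) + Φ (c * max (-a) 0) := by
  rcases le_or_gt 0 a with h | h
  · rw [abs_of_nonneg h, max_eq_left h, max_eq_right (by linarith), mul_zero, hΦ.2.2.1, add_zero]
  · rw [abs_of_neg h, max_eq_right h.le, max_eq_left (by linarith), mul_zero, hΦ.2.2.1, zero_add]

lemma young_key {Φ : ℝ → ℝ} (hΦ : IsYoung Φ) {k : ℝ} (hk : 0 ≤ k) (a b : ℝ) :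
    Φ (k * |a - b|) ≤ (Φ (2 * k * max a 0) + Φ (2 * k * max (-a) 0)) +
      (Φ (2 * k * max b 0) + Φ (2 * k * max (-b) 0)) := by
  have h2k : (0:ℝ) ≤ 2 * k := by linarith
  have h1 : Φ (k * |a - b|) = Φ (k * (a - b)) := by
    rw [← young_abs hΦ (k * (a - b)), abs_mul, abs_of_nonneg hk]
  have h2 : k * (a - b) = (1/2 : ℝ) • (2 * k * a) + (1/2 : ℝ) • (-(2 * k * b)) := by
    simp only [smul_eq_mul]; ring
  have h3 := hΦ.2.1.2 (mem_univ (2 * k * a)) (mem_univ (-(2 * k * b)))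
    (by norm_num : (0:ℝ) ≤ 1/2) (by norm_num : (0:ℝ) ≤ 1/2) (by norm_num)
  simp only [smul_eq_mul] at h3
  rw [h1, h2]
  simp only [smul_eq_mul]
  refine h3.trans ?_
  have ha : Φ (2 * k * a) ≤ Φ (2 * k * max a 0) + Φ (2 * k * max (-a) 0) := by
    have : Φ (2 * k * a) = Φ (2 * k * |a|) := by
      rw [← young_abs hΦ (2 * k * a), abs_mul, abs_of_nonneg h2k]
    rw [this, young_split hΦ h2k]
  have hb : Φ (-(2 * k * b)) ≤ Φ (2 * k * max b 0) + Φ (2 * k * max (-b) 0) := by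
    have : Φ (-(2 * k * b)) = Φ (2 * k * |b|) := by
      rw [hΦ.1, ← young_abs hΦ (2 * k * b), abs_mul, abs_of_nonneg h2k]
    rw [this, young_split hΦ h2k]
  have nna := young_nonneg hΦ (2 * k * a)
  have nnb := young_nonneg hΦ (-(2 * k * b))
  linarith [young_nonneg hΦ (2 * k * max a 0), young_nonneg hΦ (2 * k * max (-a) 0),
    young_nonneg hΦ (2 * k * max b 0), young_nonneg hΦ (2 * k * max (-b) 0)]

lemma quantile_aemeasurable (ν : Measure ℝ) [IsProbabilityMeasure ν] :
    AEMeasurable (quantile ν) P01 := by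
  have hF : Monotone fun u : ℝ => (ν (Set.Iic u)).toReal := fun u v huv =>
    ENNReal.toReal_mono (measure_ne_top ν _) (measure_mono (Iic_subset_Iic.2 huv))
  have hmono : MonotoneOn (quantile ν) (Set.Ioo (0:ℝ) 1) := by
    intro x hx y hy hxy
    refine csInf_le_csInf ?_ ?_ ?_
    · -- BddBelow {u | x < F u}
      have h0 : Tendsto (fun b : ℝ => ν (Set.Iic b)) atBot (𝓝 (ν (⋂ b : ℝ, Set.Iic b))) :=
        tendsto_measure_iInter_atBot (fun b => (measurableSet_Iic).nullMeasurableSet)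
          monotone_Iic ⟨0, measure_ne_top ν _⟩
      have hempty : (⋂ b : ℝ, Set.Iic b) = ∅ := by
        ext z; simp only [mem_iInter, mem_Iic, mem_empty_iff_false, iff_false, not_forall]
        exact ⟨z - 1, by push_neg; linarith⟩
      rw [hempty, measure_empty] at h0
      have h0' : Tendsto (fun b : ℝ => (ν (Set.Iic b)).toReal) atBot (𝓝 0) := by
        simpa [Function.comp_def] using (ENNReal.tendsto_toReal (by simp)).comp h0
      have := (h0'.eventually_lt_const hx.1)
      obtain ⟨b, hb⟩ := (eventually_atBot).1 this
      refine ⟨b, fun u hu => ?_⟩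
      by_contra hub
      push_neg at hub
      exact absurd (lt_of_le_of_lt (hF hub.le) (hb b le_rfl)) (not_lt.2 hu.le)
    · -- Nonempty {u | y < F u}
      have h1 : Tendsto (fun b : ℝ => (ν (Set.Iic b)).toReal) atTop (𝓝 1) := by
        have := tendsto_measure_Iic_atTop (μ := ν)
        simp only [measure_univ] at this
        simpa [Function.comp_def] using (ENNReal.tendsto_toReal (by simp)).comp this
      have := h1.eventually_const_lt hy.2
      obtain ⟨b, hb⟩ := (eventually_atTop).1 this
      exact ⟨b, hb b le_rfl⟩
    · intro u hu
      exact lt_of_le_of_lt hxy hu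
  exact aemeasurable_restrict_of_monotoneOn measurableSet_Ioo hmono

/-- Scheffé-type uniform integrability: a.e. convergence of quantiles with
convergence of split Orlicz moments gives uniform integrability of `Φ(k|q_n − q|)`
(from some index on) and `∫₀¹ Φ(k|q_n − q|) → 0`. -/
theorem scheffe_uniform_integrability_quantiles
    (Φ : ℝ → ℝ) (hΦ : IsYoung Φ)
    (μs : ℕ → Measure ℝ) (ν : Measure ℝ)
    [∀ n, IsProbabilityMeasure (μs n)] [IsProbabilityMeasure ν]
    (k : ℝ) (hk : 0 < k)
    (hae : ∀ᵐ u ∂P01,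
      Filter.Tendsto (fun n => quantile (μs n) u) Filter.atTop (nhds (quantile ν u)))
    (hintlim : Integrable (fun u =>
      Φ (2 * k * max (quantile ν u) 0) + Φ (2 * k * max (-(quantile ν u)) 0)) P01)
    (hintn : ∀ n, Integrable (fun u =>
      Φ (2 * k * max (quantile (μs n) u) 0) + Φ (2 * k * max (-(quantile (μs n) u)) 0)) P01)
    (hmom : Filter.Tendsto
      (fun n => ∫ u in Set.Ioo (0:ℝ) 1,
        (Φ (2 * k * max (quantile (μs n) u) 0) + Φ (2 * k * max (-(quantile (μs n) u)) 0)))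
      Filter.atTop
      (nhds (∫ u in Set.Ioo (0:ℝ) 1,
        (Φ (2 * k * max (quantile ν u) 0) + Φ (2 * k * max (-(quantile ν u)) 0))))) :
    (∃ n₀ : ℕ, UnifIntegrable
      (fun (n : ℕ) (u : ℝ) => Φ (k * |quantile (μs (n + n₀)) u - quantile ν u|)) 1 P01) ∧
    Filter.Tendsto
      (fun n => ∫ u in Set.Ioo (0:ℝ) 1, Φ (k * |quantile (μs n) u - quantile ν u|))
      Filter.atTop (nhds 0) := by
  classical
  set q : ℝ → ℝ := quantile ν with hq
  set qn : ℕ → ℝ → ℝ := fun n => quantile (μs n) with hqn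
  set f : ℕ → ℝ → ℝ := fun n u => Φ (k * |qn n u - q u|) with hf
  set g : ℝ → ℝ := fun u => Φ (2 * k * max (q u) 0) + Φ (2 * k * max (-q u) 0) with hg
  set gn : ℕ → ℝ → ℝ :=
    fun n u => Φ (2 * k * max (qn n u) 0) + Φ (2 * k * max (-qn n u) 0) with hgn
  have hΦc : Continuous Φ := young_continuous hΦ
  have hqm : AEMeasurable q P01 := quantile_aemeasurable ν
  have hqnm : ∀ n, AEMeasurable (qn n) P01 := fun n => quantile_aemeasurable (μs n)
  -- measurability
  have hfm : ∀ n, AEStronglyMeasurable (f n) P01 := fun n =>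
    (hΦc.measurable.comp_aemeasurable ((measurable_abs.comp_aemeasurable ((hqnm n).sub hqm)).const_mul k)).aestronglyMeasurable
  have hfnn : ∀ n u, 0 ≤ f n u := fun n u => young_nonneg hΦ _
  have hgnn : ∀ u, 0 ≤ g u := fun u =>
    add_nonneg (young_nonneg hΦ _) (young_nonneg hΦ _)
  have hgnnn : ∀ n u, 0 ≤ gn n u := fun n u =>
    add_nonneg (young_nonneg hΦ _) (young_nonneg hΦ _)
  have hkey : ∀ n u, f n u ≤ gn n u + g u := fun n u => young_key hΦ hk.le _ _
  -- integrability of f n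
  have hfint : ∀ n, Integrable (f n) P01 := by
    intro n
    refine Integrable.mono' ((hintn n).add hintlim) (hfm n) ?_
    exact Eventually.of_forall fun u => by
      rw [Real.norm_of_nonneg (hfnn n u)]; exact hkey n u
  -- a.e. limits
  have hf0 : ∀ᵐ u ∂P01, Tendsto (fun n => f n u) atTop (𝓝 0) := by
    filter_upwards [hae] with u hu
    have : Tendsto (fun n => k * |qn n u - q u|) atTop (𝓝 (k * |q u - q u|)) :=
      (((hu.sub tendsto_const_nhds).abs).const_mul k)
    simp only [sub_self, abs_zero, mul_zero] at this
    have := (hΦc.tendsto 0).comp this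
    simpa [hΦ.2.2.1, Function.comp_def] using this
  have hgn0 : ∀ᵐ u ∂P01, Tendsto (fun n => gn n u) atTop (𝓝 (g u)) := by
    filter_upwards [hae] with u hu
    have c1 : Continuous fun x : ℝ => Φ (2 * k * max x 0) + Φ (2 * k * max (-x) 0) :=
      ((hΦc.comp (continuous_const.mul (continuous_id.max continuous_const))).add
        (hΦc.comp (continuous_const.mul (continuous_neg.max continuous_const))))
    exact (c1.tendsto (q u)).comp hu
  -- lintegral quantities
  set F : ℕ → ENNReal := fun n => ∫⁻ u, ENNReal.ofReal (f n u) ∂P01 with hF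
  set GG : ℕ → ENNReal := fun n => ∫⁻ u, ENNReal.ofReal (gn n u + g u) ∂P01 with hGG
  set G2 : ENNReal := ∫⁻ u, ENNReal.ofReal (g u + g u) ∂P01 with hG2
  have hgg_int : ∀ n, Integrable (fun u => gn n u + g u) P01 := fun n => (hintn n).add hintlim
  have hGGeq : ∀ n, GG n = ENNReal.ofReal (∫ u, (gn n u + g u) ∂P01) := fun n =>
    (ofReal_integral_eq_lintegral_ofReal (hgg_int n)
      (Eventually.of_forall fun u => add_nonneg (hgnnn n u) (hgnn u))).symm
  have hG2eq : G2 = ENNReal.ofReal (∫ u, (g u + g u) ∂P01) :=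
    (ofReal_integral_eq_lintegral_ofReal (hintlim.add hintlim)
      (Eventually.of_forall fun u => add_nonneg (hgnn u) (hgnn u))).symm
  have hG2top : G2 ≠ ∞ := by rw [hG2eq]; exact ENNReal.ofReal_ne_top
  have hGGtop : ∀ n, GG n ≠ ∞ := fun n => by rw [hGGeq]; exact ENNReal.ofReal_ne_top
  -- convergence of GG to G2
  have hGGtendsto : Tendsto GG atTop (𝓝 G2) := by
    rw [hG2eq]
    have h1 : Tendsto (fun n => ∫ u, (gn n u + g u) ∂P01) atTop (𝓝 (∫ u, (g u + g u) ∂P01)) := by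
      have e1 : ∀ n, ∫ u, (gn n u + g u) ∂P01 = (∫ u, gn n u ∂P01) + ∫ u, g u ∂P01 := fun n =>
        integral_add (hintn n) hintlim
      have e2 : ∫ u, (g u + g u) ∂P01 = (∫ u, g u ∂P01) + ∫ u, g u ∂P01 :=
        integral_add hintlim hintlim
      simp only [e1, e2]
      exact (hmom.add tendsto_const_nhds)
    have := ENNReal.tendsto_ofReal h1
    convert this using 2
    exact (hGGeq _)
  -- h n := gn n + g - f n, its lintegral H n
  set h : ℕ → ℝ → ℝ := fun n u => gn n u + g u - f n u with hh
  have hhnn : ∀ n u, 0 ≤ h n u := fun n u => sub_nonneg.2 (hkey n u)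
  set H : ℕ → ENNReal := fun n => ∫⁻ u, ENNReal.ofReal (h n u) ∂P01 with hHdef
  have hfaem : ∀ n, AEMeasurable (fun u => ENNReal.ofReal (f n u)) P01 := fun n =>
    ENNReal.measurable_ofReal.comp_aemeasurable (hfm n).aemeasurable
  have hhaem : ∀ n, AEMeasurable (fun u => ENNReal.ofReal (h n u)) P01 := fun n =>
    ENNReal.measurable_ofReal.comp_aemeasurable
      (((hgg_int n).aestronglyMeasurable.aemeasurable).sub (hfm n).aemeasurable)
  have hsplit : ∀ n, F n + H n = GG n := by
    intro n
    rw [hF, hHdef, hGG, ← lintegral_add_left' (hfaem n)]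
    refine lintegral_congr fun u => ?_
    rw [← ENNReal.ofReal_add (hfnn n u) (hhnn n u)]
    congr 1
    simp [hh]
  have hHtop : ∀ n, H n ≠ ∞ := fun n =>
    fun htop => (hGGtop n) (by rw [← hsplit n, htop, add_top])
  -- Fatou
  have hfatou : G2 ≤ atTop.liminf H := by
    have hliminf : ∀ᵐ u ∂P01,
        ENNReal.ofReal (g u + g u) = atTop.liminf fun n => ENNReal.ofReal (h n u) := by
      filter_upwards [hf0, hgn0] with u hu1 hu2
      have : Tendsto (fun n => h n u) atTop (𝓝 (g u + g u)) := by
        have ht := (hu2.add (tendsto_const_nhds : Tendsto (fun _ : ℕ => g u) atTop (𝓝 (g u)))).sub hu1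
        simpa using ht
      exact ((ENNReal.tendsto_ofReal this).liminf_eq).symm
    calc G2 = ∫⁻ u, atTop.liminf (fun n => ENNReal.ofReal (h n u)) ∂P01 :=
          lintegral_congr_ae hliminf
      _ ≤ atTop.liminf H := lintegral_liminf_le' hhaem
  -- main convergence: F → 0
  have hFtend : Tendsto F atTop (𝓝 0) := by
    rw [ENNReal.tendsto_atTop_zero]
    intro ε hε
    have hε2 : ε / 2 ≠ 0 := (ENNReal.half_pos hε.ne').ne'
    have h1 : ∀ᶠ n in atTop, GG n ≤ G2 + ε / 2 := by
      have hlt : G2 < G2 + ε / 2 :=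
        ENNReal.lt_add_right hG2top hε2
      exact (hGGtendsto.eventually_lt_const hlt).mono fun n hn => hn.le
    have h2 : ∀ᶠ n in atTop, G2 ≤ H n + ε / 2 := by
      by_cases hc : G2 ≤ ε / 2
      · exact Eventually.of_forall fun n => hc.trans le_add_self
      · push_neg at hc
        have hsub : G2 - ε / 2 < atTop.liminf H :=
          lt_of_lt_of_le (ENNReal.sub_lt_self hG2top (lt_of_le_of_lt zero_le hc).ne' hε2) hfatou
        refine (eventually_lt_of_lt_liminf hsub).mono fun n hn => ?_
        calc G2 = G2 - ε / 2 + ε / 2 := (tsub_add_cancel_of_le hc.le).symm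
          _ ≤ H n + ε / 2 := add_le_add_left hn.le _
    have h3 : ∀ᶠ n in atTop, F n ≤ ε := by
      filter_upwards [h1, h2] with n hn1 hn2
      have hchain : H n + F n ≤ H n + ε := by
        calc H n + F n = GG n := by rw [add_comm]; exact hsplit n
          _ ≤ G2 + ε / 2 := hn1
          _ ≤ (H n + ε / 2) + ε / 2 := add_le_add_left hn2 _
          _ = H n + ε := by rw [add_assoc, ENNReal.add_halves]
      exact (ENNReal.add_le_add_iff_left (hHtop n)).1 hchain
    exact eventually_atTop.1 h3
  -- identify F with eLpNorm and with the integral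
  have hFenorm : ∀ n, eLpNorm (f n) 1 P01 = F n := by
    intro n
    rw [eLpNorm_one_eq_lintegral_enorm]
    refine lintegral_congr fun u => ?_
    rw [← Real.enorm_eq_ofReal (hfnn n u)]
  have hFint : ∀ n, ∫ u, f n u ∂P01 = (F n).toReal := by
    intro n
    rw [integral_eq_lintegral_of_nonneg_ae (Eventually.of_forall (hfnn n)) (hfm n)]
  constructor
  · refine ⟨0, ?_⟩
    have : UnifIntegrable f 1 P01 := by
      refine unifIntegrable_of_tendsto_Lp_zero le_rfl ENNReal.one_ne_top
        (fun n => memLp_one_iff_integrable.2 (hfint n)) ?_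
      simpa only [hFenorm] using hFtend
    exact this
  · have htoReal : Tendsto (fun n => (F n).toReal) atTop (𝓝 (0:ENNReal).toReal) :=
      (ENNReal.tendsto_toReal ENNReal.zero_ne_top).comp hFtend
    simp only [ENNReal.toReal_zero] at htoReal
    have : (fun n => ∫ u in Set.Ioo (0:ℝ) 1, Φ (k * |quantile (μs n) u - quantile ν u|))
        = fun n => (F n).toReal := by
      funext n
      rw [← hFint n]
      rfl
    rw [this]
    exact htoReal
end
end
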